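/- Let (Z, ν) be a measure space, x₀ ∈ ℝ^{k₀} fixed, and for each z ∈ Z define x_i(θ, z) = h_i(x_{i−1}(θ, z), θ, z) recursively, where h_i : ℝ^{k_{i−1}} × ℝ^m × Z → ℝ^{k_i}. Let f : ℝ^{k₁} × ⋯ × ℝ^{k_n} → ℝ, θ₀ ∈ ℝ^m, ε > 0, and set F(θ, z) = f(x₁(θ, z),…,x_n(θ, z)). Assume: (i) for ν-a.e. z, F(·, z) is differentiable at θ₀; (ii) for ν-a.e. z there exist measurable constants N_i(z), K_i(z), M_i(z) such that for all θ₁, θ₂, θ̄ within distance ε of θ₀: ‖h_i(x_{i−1}(θ₀,z), θ₁, z) − h_i(x_{i−1}(θ₀,z), θ₂, z)‖ ≤ N_i(z)‖θ₁ − θ₂‖; ‖h_i(x_{i−1}(θ₁,z), θ̄, z) − h_i(x_{i−1}(θ₂,z), θ̄, z)‖ ≤ K_i(z)‖x_{i−1}(θ₁,z) − x_{i−1}(θ₂,z)‖ (i ≥ 2); and |f(x₁(θ₁,z),…,x_i(θ₁,z), x_{i+1}(θ₂,z),…,x_n(θ₂,z)) − f(x₁(θ₁,z),…,x_{i−1}(θ₁,z),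 x_i(θ₂,z),…,x_n(θ₂,z))| ≤ M_i(z)‖x_i(θ₁,z) − x_i(θ₂,z)‖; (iii) F(θ, ·) is ν-integrable for ‖θ − θ₀‖ ≤ ε; (iv) ∫_Z Σ_{i=1}^n M_i(z) Σ_{j=1}^i ∏_{k=1}^{i−j} K_{i−k+1}(z) · N_j(z) dν(z) < ∞. Then θ ↦ ∫_Z F(θ, z) dν(z) is differentiable at θ₀ and its gradient equals ∫_Z ∇_θ F(θ₀, z) dν(z). -/

import Mathlib

open MeasureTheory
open scoped BigOperators

noncomputable section

/-- Any continuous linear functional on Euclidean space is the sum of its values on the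
standard basis times the coordinate projections. -/
lemma clm_decomp {m : ℕ} (L : EuclideanSpace ℝ (Fin m) →L[ℝ] ℝ) :
    L = ∑ i : Fin m, L (EuclideanSpace.single i 1) • (EuclideanSpace.proj i :
      EuclideanSpace ℝ (Fin m) →L[ℝ] ℝ) := by
  ext v
  have hv : ∑ i, (EuclideanSpace.basisFun (Fin m) ℝ).repr v i •
      (EuclideanSpace.basisFun (Fin m) ℝ) i = v :=
    (EuclideanSpace.basisFun (Fin m) ℝ).sum_repr v
  simp only [EuclideanSpace.basisFun_apply, EuclideanSpace.basisFun_repr] at hv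
  conv_lhs => rw [← hv]
  rw [map_sum]
  simp [mul_comm]

/-- **Unbiasedness of the pathwise gradient estimator via local Lipschitz continuity
(Theorem 2.2).**  For each random input `z`, states `x_i(θ,z)` satisfy
`x_i = h_i(x_{i-1}, θ, z)` from the fixed `x₀`, and `F(θ,z) = f(x₁(θ,z),…,x_n(θ,z))`.
Indices are shifted as in the paper's recursion (`h i`, `N i`, `M i` stand for
`h_{i+1}`, `N_{i+1}`, `M_{i+1}`; `K j`, `j = 1,…,n-1` stand for the paper's `K_{j+1}`).
Assuming a.e. differentiability of `F(·,z)` at `θ₀`, the a.e. local Lipschitz bounds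
(a), (b), (c) with measurable constants, integrability of `F(θ,·)` on the `ε`-ball, and
integrability of the combined Lipschitz bound, the expected objective
`θ ↦ ∫ F(θ,z) dν(z)` is differentiable at `θ₀` with derivative `∫ ∇_θ F(θ₀,z) dν(z)`. -/
theorem stmt_5
    (n m : ℕ) (hn : 1 ≤ n) (k : ℕ → ℕ)
    {Z : Type*} [MeasurableSpace Z] (ν : Measure Z)
    (x₀ : EuclideanSpace ℝ (Fin (k 0)))
    (h : (i : ℕ) → EuclideanSpace ℝ (Fin (k i)) × EuclideanSpace ℝ (Fin m) × Z →
      EuclideanSpace ℝ (Fin (k (i + 1))))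
    (f : ((j : Fin n) → EuclideanSpace ℝ (Fin (k (j.1 + 1)))) → ℝ)
    (θ₀ : EuclideanSpace ℝ (Fin m)) (ε : ℝ) (hε : 0 < ε)
    (x : (i : ℕ) → EuclideanSpace ℝ (Fin m) → Z → EuclideanSpace ℝ (Fin (k i)))
    (hx0 : ∀ θ z, x 0 θ z = x₀)
    (hxs : ∀ i θ z, x (i + 1) θ z = h i (x i θ z, θ, z))
    (F : EuclideanSpace ℝ (Fin m) → Z → ℝ)
    (hF : ∀ θ z, F θ z = f (fun j : Fin n => x (j.1 + 1) θ z))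
    (hdiff : ∀ᵐ z ∂ν, DifferentiableAt ℝ (fun θ => F θ z) θ₀)
    (N K M : ℕ → Z → ℝ)
    (hNmeas : ∀ j, Measurable (N j)) (hKmeas : ∀ j, Measurable (K j))
    (hMmeas : ∀ j, Measurable (M j))
    (hlip : ∀ᵐ z ∂ν,
      (∀ j, 0 ≤ N j z) ∧ (∀ j, 0 ≤ K j z) ∧ (∀ j, 0 ≤ M j z) ∧
      (∀ j < n, ∀ θ₁ θ₂ : EuclideanSpace ℝ (Fin m),
        ‖θ₁ - θ₀‖ ≤ ε → ‖θ₂ - θ₀‖ ≤ ε →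
        ‖h j (x j θ₀ z, θ₁, z) - h j (x j θ₀ z, θ₂, z)‖ ≤ N j z * ‖θ₁ - θ₂‖) ∧
      (∀ j, 1 ≤ j → j < n → ∀ θ₁ θ₂ θb : EuclideanSpace ℝ (Fin m),
        ‖θ₁ - θ₀‖ ≤ ε → ‖θ₂ - θ₀‖ ≤ ε → ‖θb - θ₀‖ ≤ ε →
        ‖h j (x j θ₁ z, θb, z) - h j (x j θ₂ z, θb, z)‖ ≤ K j z * ‖x j θ₁ z - x j θ₂ z‖) ∧
      (∀ i < n, ∀ θ₁ θ₂ : EuclideanSpace ℝ (Fin m),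
        ‖θ₁ - θ₀‖ ≤ ε → ‖θ₂ - θ₀‖ ≤ ε →
        |f (fun j : Fin n => if j.1 < i + 1 then x (j.1 + 1) θ₁ z else x (j.1 + 1) θ₂ z) -
            f (fun j : Fin n => if j.1 < i then x (j.1 + 1) θ₁ z else x (j.1 + 1) θ₂ z)| ≤
          M i z * ‖x (i + 1) θ₁ z - x (i + 1) θ₂ z‖))
    (hFint : ∀ θ : EuclideanSpace ℝ (Fin m), ‖θ - θ₀‖ ≤ ε → Integrable (F θ) ν)
    (hBint : Integrable (fun z => ∑ i ∈ Finset.range n, M i z *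
      ∑ j ∈ Finset.range (i + 1), (∏ t ∈ Finset.Ico (j + 1) (i + 1), K t z) * N j z) ν) :
    HasFDerivAt (fun θ => ∫ z, F θ z ∂ν)
      (∫ z, fderiv ℝ (fun θ => F θ z) θ₀ ∂ν) θ₀ := by
  classical
  set B : ℕ → Z → ℝ := fun i z =>
    ∑ j ∈ Finset.range (i + 1), (∏ t ∈ Finset.Ico (j + 1) (i + 1), K t z) * N j z with hBdef
  -- recursion for B
  have hBrec : ∀ i z, B (i + 1) z = K (i + 1) z * B i z + N (i + 1) z := by
    intro i z
    show ∑ j ∈ Finset.range (i + 1 + 1), (∏ t ∈ Finset.Ico (j + 1) (i + 1 + 1), K t z) * N j z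
        = K (i + 1) z *
          ∑ j ∈ Finset.range (i + 1), (∏ t ∈ Finset.Ico (j + 1) (i + 1), K t z) * N j z +
          N (i + 1) z
    rw [Finset.sum_range_succ, Finset.Ico_self, Finset.prod_empty, one_mul, Finset.mul_sum]
    congr 1
    refine Finset.sum_congr rfl fun j hj => ?_
    rw [Finset.prod_Ico_succ_top (Nat.succ_le_succ (Nat.lt_succ_iff.mp (Finset.mem_range.mp hj)))]
    ring
  -- measurability of F θ on the ball
  have hFmeas : ∀ θ ∈ Metric.ball θ₀ ε, AEStronglyMeasurable (F θ) ν := by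
    intro θ hθ
    exact (hFint θ (le_of_lt (by rwa [Metric.mem_ball, dist_eq_norm] at hθ))).1
  -- the Lipschitz bound
  have hlip' : ∀ᵐ z ∂ν, ∀ θ ∈ Metric.ball θ₀ ε,
      ‖F θ z - F θ₀ z‖ ≤ (∑ i ∈ Finset.range n, M i z * B i z) * ‖θ - θ₀‖ := by
    filter_upwards [hlip] with z hz θ hθball
    obtain ⟨hN, hK, hM, ha, hb, hc⟩ := hz
    have hθ : ‖θ - θ₀‖ ≤ ε := le_of_lt (by rwa [Metric.mem_ball, dist_eq_norm] at hθball)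
    have hθ₀ : ‖θ₀ - θ₀‖ ≤ ε := by simp [hε.le]
    -- Claim A : state bound by induction
    have claimA : ∀ i, i < n → ‖x (i + 1) θ z - x (i + 1) θ₀ z‖ ≤ B i z * ‖θ - θ₀‖ := by
      intro i
      induction i with
      | zero =>
        intro h0
        have hx00 : x 0 θ z = x 0 θ₀ z := by rw [hx0, hx0]
        have := ha 0 h0 θ θ₀ hθ hθ₀
        rw [hxs 0 θ z, hxs 0 θ₀ z, hx00]
        simpa [hBdef] using this
      | succ i ih =>
        intro hin
        have hiin : i < n := Nat.lt_of_succ_lt hin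
        have key : x (i + 2) θ z - x (i + 2) θ₀ z =
            (h (i + 1) (x (i + 1) θ z, θ, z) - h (i + 1) (x (i + 1) θ₀ z, θ, z)) +
            (h (i + 1) (x (i + 1) θ₀ z, θ, z) - h (i + 1) (x (i + 1) θ₀ z, θ₀, z)) := by
          rw [hxs (i + 1) θ z, hxs (i + 1) θ₀ z, sub_add_sub_cancel]
        calc ‖x (i + 2) θ z - x (i + 2) θ₀ z‖
            ≤ ‖h (i + 1) (x (i + 1) θ z, θ, z) - h (i + 1) (x (i + 1) θ₀ z, θ, z)‖ +
              ‖h (i + 1) (x (i + 1) θ₀ z, θ, z) - h (i + 1) (x (i + 1) θ₀ z, θ₀, z)‖ := by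
              rw [key]; exact norm_add_le _ _
          _ ≤ K (i + 1) z * ‖x (i + 1) θ z - x (i + 1) θ₀ z‖ + N (i + 1) z * ‖θ - θ₀‖ :=
              add_le_add (hb (i + 1) (Nat.le_add_left 1 i) hin θ θ₀ θ hθ hθ₀ hθ)
                (ha (i + 1) hin θ θ₀ hθ hθ₀)
          _ ≤ K (i + 1) z * (B i z * ‖θ - θ₀‖) + N (i + 1) z * ‖θ - θ₀‖ :=
              add_le_add (mul_le_mul_of_nonneg_left (ih hiin) (hK _)) le_rfl
          _ = B (i + 1) z * ‖θ - θ₀‖ := by rw [hBrec]; ring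
    -- Claim B : telescoping
    set g : ℕ → ℝ := fun i =>
      f (fun j : Fin n => if j.1 < i then x (j.1 + 1) θ z else x (j.1 + 1) θ₀ z) with hgdef
    have hg0 : g 0 = F θ₀ z := by simp [hgdef, hF]
    have hgn : g n = F θ z := by
      rw [hF]
      simp only [hgdef]
      congr 1
      funext j
      simp [j.2]
    have htel : F θ z - F θ₀ z = ∑ i ∈ Finset.range n, (g (i + 1) - g i) := by
      rw [Finset.sum_range_sub g n, hg0, hgn]
    rw [Real.norm_eq_abs, htel]
    calc |∑ i ∈ Finset.range n, (g (i + 1) - g i)|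
        ≤ ∑ i ∈ Finset.range n, |g (i + 1) - g i| := Finset.abs_sum_le_sum_abs _ _
      _ ≤ ∑ i ∈ Finset.range n, M i z * (B i z * ‖θ - θ₀‖) := by
          refine Finset.sum_le_sum fun i hi => ?_
          have hin : i < n := Finset.mem_range.mp hi
          refine le_trans (hc i hin θ θ₀ hθ hθ₀) ?_
          exact mul_le_mul_of_nonneg_left (claimA i hin) (hM i)
      _ = (∑ i ∈ Finset.range n, M i z * B i z) * ‖θ - θ₀‖ := by
          rw [Finset.sum_mul]; exact Finset.sum_congr rfl fun i _ => by ring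
  -- differentiability a.e.
  have hdiff' : ∀ᵐ z ∂ν, HasFDerivAt (fun θ => F θ z)
      (fderiv ℝ (fun θ => F θ z) θ₀) θ₀ := by
    filter_upwards [hdiff] with z hz using hz.hasFDerivAt
  -- measurability of the derivative, as an a.e. limit of difference quotients
  have hD_meas : AEStronglyMeasurable (fun z => fderiv ℝ (fun θ => F θ z) θ₀) ν := by
    obtain ⟨k₀, hk₀⟩ : ∃ k₀ : ℕ, ε⁻¹ ≤ (k₀ : ℝ) := exists_nat_ge ε⁻¹
    set c : ℕ → ℝ := fun p => (p : ℝ) + (k₀ : ℝ) with hcdef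
    have hk₀pos : (0 : ℝ) < (k₀ : ℝ) := lt_of_lt_of_le (inv_pos.mpr hε) hk₀
    have hcpos : ∀ p, 0 < c p := fun p => by
      have : (0 : ℝ) ≤ (p : ℝ) := Nat.cast_nonneg p
      simp only [hcdef]; linarith
    have hcinv : ∀ p, (c p)⁻¹ ≤ ε := by
      intro p
      refine inv_le_of_inv_le₀ hε ?_
      have : (0 : ℝ) ≤ (p : ℝ) := Nat.cast_nonneg p
      calc ε⁻¹ ≤ (k₀ : ℝ) := hk₀
        _ ≤ c p := by simp only [hcdef]; linarith
    set v : Fin m → EuclideanSpace ℝ (Fin m) := fun i => EuclideanSpace.single i 1 with hvdef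
    have hvnorm : ∀ i, ‖v i‖ = 1 := by
      intro i; simp [hvdef, EuclideanSpace.norm_single]
    set A : ℕ → Z → (EuclideanSpace ℝ (Fin m) →L[ℝ] ℝ) := fun p z =>
      ∑ i : Fin m, (c p • (F (θ₀ + (c p)⁻¹ • v i) z - F θ₀ z)) •
        (EuclideanSpace.proj i : EuclideanSpace ℝ (Fin m) →L[ℝ] ℝ) with hAdef
    have hmem : ∀ p i, ‖(θ₀ + (c p)⁻¹ • v i) - θ₀‖ ≤ ε := by
      intro p i
      rw [add_sub_cancel_left, norm_smul, hvnorm, mul_one, norm_inv, Real.norm_eq_abs,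
        abs_of_pos (hcpos p)]
      exact hcinv p
    have hAmeas : ∀ p, AEStronglyMeasurable (A p) ν := by
      intro p
      refine Finset.aestronglyMeasurable_fun_sum _ fun i _ => ?_
      exact ((((hFint _ (hmem p i)).1.sub (hFint θ₀ (by simp [hε.le])).1).const_smul
        (c p)).smul aestronglyMeasurable_const)
    refine aestronglyMeasurable_of_tendsto_ae Filter.atTop hAmeas ?_
    filter_upwards [hdiff] with z hz
    have hfd : HasFDerivAt (fun θ => F θ z) (fderiv ℝ (fun θ => F θ z) θ₀) θ₀ :=
      hz.hasFDerivAt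
    have hcnorm : Filter.Tendsto (fun p => ‖c p‖) Filter.atTop Filter.atTop := by
      have h1 : Filter.Tendsto c Filter.atTop Filter.atTop :=
        Filter.tendsto_atTop_add_const_right _ _ tendsto_natCast_atTop_atTop
      exact h1.congr fun p => (Real.norm_of_nonneg (hcpos p).le).symm
    have hlim : ∀ i : Fin m, Filter.Tendsto
        (fun p => c p • (F (θ₀ + (c p)⁻¹ • v i) z - F θ₀ z)) Filter.atTop
        (nhds (fderiv ℝ (fun θ => F θ z) θ₀ (v i))) := fun i => hfd.lim (v i) hcnorm
    have hdec := clm_decomp (fderiv ℝ (fun θ => F θ z) θ₀)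
    rw [hdec]
    exact tendsto_finset_sum _ fun i _ => (hlim i).smul_const _
  -- apply the dominated differentiation theorem
  exact (hasFDerivAt_integral_of_dominated_loc_of_lip' (Metric.ball_mem_nhds θ₀ hε) hFmeas
    (hFint θ₀ (by simp [hε.le])) hD_meas hlip' hBint hdiff').2
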